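/- In a pseudo-Garside germ (G, H, ≤, w₀), for all a, b ∈ G: a ≲ ab if and only if b ≲ a⁻¹w₀. -/
import Mathlib


/-- A pseudo-Garside germ `(G, H, ≤, w₀)`: groups `H ⊆ G`, a lattice order on
`G/H` (encoded by the preorder `lesim` on `G`, writing `a ≲ b` for `aH ≤ bH`)
with least element `H` and greatest element `w₀H`, satisfying (PG2) and (PG3).
`a*b` is defined (and equals `ab`) iff `lesim a (a*b)`. -/
structure PseudoGarsideGerm (G : Type*) [Group G] where
  H : Subgroup G
  lesim : G → G → Prop
  w₀ : G
  refl : ∀ a, lesim a a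
  trans : ∀ a b c, lesim a b → lesim b c → lesim a c
  /-- `≤` is antisymmetric as an order on cosets. -/
  antisymm : ∀ a b, lesim a b → lesim b a → a⁻¹ * b ∈ H
  /-- `lesim` only depends on the cosets. -/
  coset_congr : ∀ a b h h', h ∈ H → h' ∈ H → lesim a b → lesim (a * h) (b * h')
  /-- `H` is the least element. -/
  least : ∀ a, lesim 1 a
  /-- `w₀H` is the greatest element. -/
  greatest : ∀ a, lesim a w₀
  /-- Any two cosets have a join. -/
  sup_exists : ∀ a b, ∃ d, lesim a d ∧ lesim b d ∧ ∀ e, lesim a e → lesim b e → lesim d e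
  /-- Any two cosets have a meet. -/
  inf_exists : ∀ a b, ∃ d, lesim d a ∧ lesim d b ∧ ∀ e, lesim e a → lesim e b → lesim e d
  /-- (PG2): `(a*b)*c` is defined iff `a*(b*c)` is. -/
  pg2 : ∀ a b c, (lesim a (a * b) ∧ lesim (a * b) (a * b * c)) ↔
    (lesim b (b * c) ∧ lesim a (a * b * c))
  /-- (PG3): `a ≲ b` iff `w₀aw₀⁻¹ ≲ w₀bw₀⁻¹`. -/
  pg3 : ∀ a b, lesim a b ↔ lesim (w₀ * a * w₀⁻¹) (w₀ * b * w₀⁻¹)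

/-- In a pseudo-Garside germ, `a ≲ ab` iff `b ≲ a⁻¹w₀`. -/
theorem stmt10 {G : Type*} [Group G] (Γ : PseudoGarsideGerm G) (a b : G) :
    Γ.lesim a (a * b) ↔ Γ.lesim b (a⁻¹ * Γ.w₀) := by
  have h := Γ.pg2 a b (b⁻¹ * a⁻¹ * Γ.w₀)
  have e1 : b * (b⁻¹ * a⁻¹ * Γ.w₀) = a⁻¹ * Γ.w₀ := by group
  have e2 : a * b * (b⁻¹ * a⁻¹ * Γ.w₀) = Γ.w₀ := by group
  rw [e1, e2] at h
  constructor
  · intro hab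
    exact (h.mp ⟨hab, Γ.greatest _⟩).1
  · intro hb
    exact (h.mpr ⟨hb, Γ.greatest _⟩).1
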